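/- arXiv:2002.09382 — 6 statements merged into one kernel-verified Lean document; each statement's English description precedes it below -/
import Mathlib

section
/- Let m(N) = N/2 + log₂ C(N, ⌊N/2⌋) be the number of bits per symbol of the optimal OFDM-IM configuration. If T : ℕ → ℝ is any function satisfying T(N) ≥ m(N) − 1 for all N (any mapper implementation must at least read its m(N)-bit input), then there exist a constant c > 0 and an index N₀ such that T(N) ≥ c·N for all N ≥ N₀; moreover one may take c = 5/4. Hence under the optimal spectral-efficiency setup (g = 1, k = N/2, M = 2) the OFDM-IM mapping complexity lower bound is Ω(N), the same as that of the classic OFDM mapper. -/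
lemma ofdm_aux_sum : ∀ N : ℕ, 2 ^ N ≤ (N + 1) * N.choose (N / 2) := by
  intro N
  calc 2 ^ N = ∑ i ∈ Finset.range (N + 1), N.choose i := (Nat.sum_range_choose N).symm
    _ ≤ ∑ _i ∈ Finset.range (N + 1), N.choose (N / 2) :=
        Finset.sum_le_sum fun i _ => Nat.choose_le_middle i N
    _ = (N + 1) * N.choose (N / 2) := by simp [Finset.sum_const, mul_comm]

lemma ofdm_aux_pow : ∀ k : ℕ, 6 ≤ k → 8 * k + 8 ≤ 2 ^ k := by
  intro k hk
  induction k with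
  | zero => omega
  | succ n ih =>
    rcases Nat.lt_or_ge n 6 with h | h
    · have hn5 : n = 5 := by omega
      subst hn5; norm_num
    · have h1 := ih h
      have h2 : 2 ^ (n + 1) = 2 * 2 ^ n := by rw [pow_succ]; ring
      omega

/-- Under the optimal spectral-efficiency setup (`g = 1`, `k = ⌊N/2⌋`, `M = 2`),
with `m(N) = N/2 + log₂ C(N, ⌊N/2⌋)` bits per symbol, any mapper whose cost satisfies
`T(N) ≥ m(N) − 1` (it must at least read its input) obeys the lower bound `T(N) = Ω(N)`;
moreover one may take the constant `c = 5/4`. -/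
theorem ofdm_im_mapper_lower_bound_omega_N
    (m : ℕ → ℝ) (hm : ∀ N : ℕ, m N = (N : ℝ) / 2 + Real.logb 2 (N.choose (N / 2)))
    (T : ℕ → ℝ) (hT : ∀ N : ℕ, T N ≥ m N - 1) :
    (∃ c : ℝ, 0 < c ∧ ∃ N₀ : ℕ, ∀ N : ℕ, N₀ ≤ N → T N ≥ c * N) ∧
    (∃ N₀ : ℕ, ∀ N : ℕ, N₀ ≤ N → T N ≥ (5 / 4) * N) := by
  have key : ∀ N : ℕ, 48 ≤ N → T N ≥ (5 / 4) * N := by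
    intro N hN
    have hcpos : (0 : ℝ) < (N.choose (N / 2) : ℝ) := by
      exact_mod_cast Nat.choose_pos (Nat.div_le_self N 2)
    have hNpos : (0 : ℝ) < (N : ℝ) + 1 := by positivity
    -- step 1: N ≤ logb 2 (N+1) + logb 2 choose
    have hsum : ((2 : ℝ) ^ N) ≤ ((N : ℝ) + 1) * (N.choose (N / 2) : ℝ) := by
      exact_mod_cast ofdm_aux_sum N
    have h1 : (N : ℝ) ≤ Real.logb 2 ((N : ℝ) + 1) + Real.logb 2 (N.choose (N / 2)) := by
      have := Real.logb_le_logb_of_le (by norm_num : (1:ℝ) < 2) (by positivity : (0:ℝ) < 2 ^ N) hsum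
      rwa [Real.logb_mul (by positivity) (ne_of_gt hcpos),
        Real.logb_pow, Real.logb_self_eq_one (by norm_num : (1:ℝ) < 2), mul_one] at this
    -- step 2: logb 2 (N+1) ≤ N/8
    set k := N / 8 with hk
    have hk6 : 6 ≤ k := by omega
    have hle : (N : ℝ) + 1 ≤ (2 : ℝ) ^ k := by
      have : N + 1 ≤ 2 ^ k := by
        have := ofdm_aux_pow k hk6
        omega
      exact_mod_cast this
    have h2 : Real.logb 2 ((N : ℝ) + 1) ≤ (N : ℝ) / 8 := by
      have := Real.logb_le_logb_of_le (by norm_num : (1:ℝ) < 2) hNpos hle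
      rw [Real.logb_pow, Real.logb_self_eq_one (by norm_num : (1:ℝ) < 2), mul_one] at this
      have hkN : (k : ℝ) ≤ (N : ℝ) / 8 := by
        have : 8 * k ≤ N := by omega
        have : (8 : ℝ) * k ≤ N := by exact_mod_cast this
        linarith
      linarith
    have hN' : (48 : ℝ) ≤ (N : ℝ) := by exact_mod_cast hN
    have hTN := hT N
    rw [hm N] at hTN
    linarith
  exact ⟨⟨5 / 4, by norm_num, 48, key⟩, 48, key⟩
end

section
/- Let M ≥ 2 be a fixed constellation size and let k : ℕ → ℕ satisfy k(N) ≤ N for all N and lim_{N→∞} k(N)/N = 0 (i.e., k = o(N)). Then the per-subcarrier number of bits of the corresponding OFDM-IM configuration tends to zero: lim_{N→∞} [ k(N)·log₂ M + log₂ C(N, k(N)) ] / N = 0. In particular, such a configuration cannot attain the maximal asymptotic spectral-efficiency gain 3/2 over BPSK-OFDM, which is achieved only with k = N/2 and M = 2. -/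
open Filter

lemma neg_mul_log_le_two_sqrt {x : ℝ} (hx : 0 ≤ x) :
    -(x * Real.log x) ≤ 2 * Real.sqrt x := by
  rcases eq_or_lt_of_le hx with h | h
  · simp [← h]
  · have hs : 0 < Real.sqrt x := Real.sqrt_pos.mpr h
    have hlog : Real.log x = 2 * Real.log (Real.sqrt x) := by
      rw [Real.log_sqrt hx]; ring
    have h1 : Real.log (Real.sqrt x)⁻¹ ≤ (Real.sqrt x)⁻¹ - 1 :=
      Real.log_le_sub_one_of_pos (inv_pos.mpr hs)
    rw [Real.log_inv] at h1
    have h2 : -Real.log (Real.sqrt x) ≤ (Real.sqrt x)⁻¹ := by linarith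
    have h3 : x * (Real.sqrt x)⁻¹ = Real.sqrt x := by
      rw [← div_eq_mul_inv]; exact Real.div_sqrt
    have h4 := mul_le_mul_of_nonneg_left h2 hx
    rw [h3] at h4
    rw [hlog]; nlinarith

lemma choose_le_pow_exp (N j : ℕ) (hj : 1 ≤ j) :
    (N.choose j : ℝ) ≤ ((N : ℝ) * Real.exp 1 / j) ^ j := by
  have hjpos : (0:ℝ) < j := by exact_mod_cast hj
  have hfac : (0:ℝ) < (Nat.factorial j : ℝ) := by exact_mod_cast Nat.factorial_pos j
  have h1 : (N.choose j : ℝ) ≤ (N:ℝ) ^ j / (Nat.factorial j : ℝ) := by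
    exact_mod_cast Nat.choose_le_pow_div j N
  refine h1.trans ?_
  have h2 : (j:ℝ) ^ j / (Nat.factorial j : ℝ) ≤ Real.exp j := Real.pow_div_factorial_le_exp (j:ℝ) (Nat.cast_nonneg j) j
  have h3 : (j:ℝ) ^ j ≤ Real.exp j * (Nat.factorial j : ℝ) := by
    rw [div_le_iff₀ hfac] at h2; exact h2
  have hpow : ((N : ℝ) * Real.exp 1 / j) ^ j = (N:ℝ)^j * Real.exp j / (j:ℝ)^j := by
    rw [div_pow, mul_pow, Real.exp_one_pow]
  rw [hpow, div_le_div_iff₀ hfac (by positivity)]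
  have hNn : (0:ℝ) ≤ (N:ℝ)^j := by positivity
  nlinarith [mul_le_mul_of_nonneg_left h3 hNn]

/-- If the number of active subcarriers satisfies `k = o(N)`, then the per-subcarrier
number of bits of the corresponding OFDM-IM configuration tends to zero:
`lim_{N→∞} [k(N)·log₂ M + log₂ C(N, k(N))] / N = 0`. -/
theorem ofdm_im_sublinear_k_vanishing_spectral_efficiency
    (M : ℕ) (hM : 2 ≤ M) (k : ℕ → ℕ) (hk : ∀ N : ℕ, k N ≤ N)
    (hko : Tendsto (fun N : ℕ => (k N : ℝ) / N) atTop (nhds 0)) :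
    Tendsto (fun N : ℕ =>
        ((k N : ℝ) * Real.logb 2 M + Real.logb 2 (N.choose (k N))) / N)
      atTop (nhds 0) := by
  set L2 : ℝ := Real.log 2 with hL2
  have hL2pos : 0 < L2 := Real.log_pos (by norm_num)
  have hMlog : 0 ≤ Real.logb 2 M :=
    Real.logb_nonneg (by norm_num) (by exact_mod_cast hM.trans' (by norm_num))
  set g : ℝ → ℝ := fun x => x * (Real.logb 2 M + 1 / L2) + 2 * Real.sqrt x / L2 with hg
  have hgcont : Continuous g := by
    apply Continuous.add
    · fun_prop
    · exact ((continuous_const.mul Real.continuous_sqrt).div_const L2)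
  have h0 : g 0 = 0 := by simp [hg]
  have hgt : Tendsto (fun N : ℕ => g ((k N : ℝ) / N)) atTop (nhds 0) := by
    have := (hgcont.tendsto 0).comp hko
    rwa [h0] at this
  apply squeeze_zero ?_ ?_ hgt
  · intro N
    apply div_nonneg _ (Nat.cast_nonneg N)
    have hc1 : 1 ≤ N.choose (k N) := Nat.choose_pos (hk N)
    have : 0 ≤ Real.logb 2 (N.choose (k N)) :=
      Real.logb_nonneg (by norm_num) (by exact_mod_cast hc1)
    positivity
  · intro N
    rcases Nat.eq_zero_or_pos (k N) with hk0 | hk1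
    · rcases Nat.eq_zero_or_pos N with hN0 | hN1
      · simp [hk0, hN0, hg]
      · have hx : (k N : ℝ) / N = 0 := by simp [hk0]
        simp only [hk0, Nat.cast_zero, zero_mul, Nat.choose_zero_right, Nat.cast_one,
          Real.logb_one, zero_add, add_zero, zero_div, hx, hg]
        simp
    · have hNpos : 0 < N := lt_of_lt_of_le hk1 (hk N)
      have hn : (0:ℝ) < N := by exact_mod_cast hNpos
      have hc : (0:ℝ) < k N := by exact_mod_cast hk1
      set x : ℝ := (k N : ℝ) / N with hxdef
      have hxpos : 0 < x := div_pos hc hn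
      have hlogx : Real.log x = Real.log (k N) - Real.log N :=
        Real.log_div (ne_of_gt hc) (ne_of_gt hn)
      -- bound on logb of choose
      have hchpos : (0:ℝ) < (N.choose (k N) : ℝ) := by
        exact_mod_cast Nat.choose_pos (hk N)
      have hb := choose_le_pow_exp N (k N) hk1
      have hlogch : Real.log (N.choose (k N)) ≤ (k N) * (Real.log N + 1 - Real.log (k N)) := by
        calc Real.log (N.choose (k N)) ≤ Real.log (((N:ℝ) * Real.exp 1 / (k N)) ^ (k N)) :=
              Real.log_le_log hchpos hb
          _ = (k N) * (Real.log N + 1 - Real.log (k N)) := by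
              rw [Real.log_pow, Real.log_div (by positivity) (ne_of_gt hc),
                Real.log_mul (ne_of_gt hn) (Real.exp_pos 1).ne', Real.log_exp]
      have hlogbch : Real.logb 2 (N.choose (k N)) ≤
          (k N) * (Real.log N + 1 - Real.log (k N)) / L2 := by
        rw [Real.logb]
        exact div_le_div_of_nonneg_right hlogch hL2pos.le
      -- main chain
      have key : ((k N : ℝ) * Real.logb 2 M + Real.logb 2 (N.choose (k N))) / N ≤
          x * Real.logb 2 M + (x - x * Real.log x) / L2 := by
        have h5 : ((k N : ℝ) * Real.logb 2 M + (k N) * (Real.log N + 1 - Real.log (k N)) / L2) / N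
            = x * Real.logb 2 M + (x - x * Real.log x) / L2 := by
          rw [hlogx, hxdef]; field_simp; ring
        calc ((k N : ℝ) * Real.logb 2 M + Real.logb 2 (N.choose (k N))) / N
            ≤ ((k N : ℝ) * Real.logb 2 M + (k N) * (Real.log N + 1 - Real.log (k N)) / L2) / N :=
              div_le_div_of_nonneg_right (by linarith) hn.le
          _ = _ := h5
      refine key.trans ?_
      have hneg : -(x * Real.log x) ≤ 2 * Real.sqrt x := neg_mul_log_le_two_sqrt hxpos.le
      have : (x - x * Real.log x) / L2 ≤ (x + 2 * Real.sqrt x) / L2 :=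
        div_le_div_of_nonneg_right (by linarith) hL2pos.le
      have hgx : g x = x * Real.logb 2 M + (x + 2 * Real.sqrt x) / L2 := by
        rw [hg]; field_simp; ring
      rw [hgx]; linarith
end

section
/- Let m(N) = N/2 + log₂ C(N, ⌊N/2⌋) be the number of bits per symbol of the optimal OFDM-IM configuration, and let T : ℕ → ℝ be a function with T(N) > 0 for all N. If liminf_{N→∞} m(N)/T(N) > 0 (the spectro-computational throughput does not vanish), then T(N) = O(N), i.e. there exist a constant C > 0 and an index N₀ such that T(N) ≤ C·N for all N ≥ N₀. -/
open Filter

lemma choose_le_two_pow' (N : ℕ) : N.choose (N / 2) ≤ 2 ^ N := by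
  calc N.choose (N / 2) ≤ ∑ i ∈ Finset.range (N + 1), N.choose i :=
        Finset.single_le_sum (fun i _ => Nat.zero_le _)
          (Finset.mem_range.mpr (Nat.lt_succ_of_le (Nat.div_le_self _ _)))
    _ = 2 ^ N := Nat.sum_range_choose N

/-- With `m(N) = N/2 + log₂ C(N, ⌊N/2⌋)` bits per symbol of the optimal OFDM-IM
configuration, if the spectro-computational throughput `m(N)/T(N)` of a mapper with
positive cost `T` does not vanish (`liminf > 0`), then `T(N) = O(N)`. -/
theorem ofdm_im_mapper_upper_bound_big_O_N
    (m : ℕ → ℝ) (hm : ∀ N : ℕ, m N = (N : ℝ) / 2 + Real.logb 2 (N.choose (N / 2)))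
    (T : ℕ → ℝ) (hTpos : ∀ N : ℕ, 0 < T N)
    (h : 0 < Filter.liminf (fun N : ℕ => m N / T N) atTop) :
    ∃ C : ℝ, 0 < C ∧ ∃ N₀ : ℕ, ∀ N : ℕ, N₀ ≤ N → T N ≤ C * N := by
  set c := Filter.liminf (fun N : ℕ => m N / T N) atTop with hc
  have hbdd : Filter.IsBoundedUnder (· ≥ ·) atTop (fun N : ℕ => m N / T N) := by
    refine ⟨0, Filter.eventually_map.mpr (Filter.Eventually.of_forall fun N => ?_)⟩
    have hm0 : 0 ≤ m N := by
      rw [hm N]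
      have h1 : (0:ℝ) ≤ Real.logb 2 (N.choose (N / 2)) := by
        apply Real.logb_nonneg one_lt_two
        exact_mod_cast Nat.one_le_iff_ne_zero.mpr (Nat.choose_pos (Nat.div_le_self _ _)).ne'
      positivity
    exact div_nonneg hm0 (hTpos N).le
  have hev : ∀ᶠ N : ℕ in atTop, c / 2 < m N / T N :=
    Filter.eventually_lt_of_lt_liminf (by linarith) hbdd
  obtain ⟨N₀, hN₀⟩ := Filter.eventually_atTop.mp hev
  refine ⟨3 / c, by positivity, N₀, fun N hN => ?_⟩
  have hlt := hN₀ N hN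
  have hmle : m N ≤ 3 / 2 * N := by
    rw [hm N]
    have h1 : Real.logb 2 (N.choose (N / 2)) ≤ N := by
      have h2 : (N.choose (N / 2) : ℝ) ≤ 2 ^ N := by exact_mod_cast choose_le_two_pow' N
      calc Real.logb 2 (N.choose (N / 2)) ≤ Real.logb 2 (2 ^ N) := by
            apply Real.logb_le_logb_of_le one_lt_two (by exact_mod_cast Nat.choose_pos (Nat.div_le_self _ _)) h2
        _ = N := by
            rw [Real.logb_pow, Real.logb_self_eq_one one_lt_two]; ring
    linarith
  have hT := hTpos N
  have hkey : c / 2 * T N < m N := (lt_div_iff₀ hT).mp hlt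
  have h2c : (0:ℝ) < c / 2 := by linarith
  rw [show 3 / c * N = (3 / 2 * N) / (c / 2) by field_simp, le_div_iff₀ h2c]
  nlinarith
end

section
/- Let m(N) = N/2 + log₂ C(N, ⌊N/2⌋) be the number of bits per symbol of the optimal OFDM-IM configuration, and let T : ℕ → ℝ be a function with T(N) > 0 for all N. If T grows super-linearly, i.e. lim_{N→∞} N/T(N) = 0, then the spectro-computational throughput nullifies: lim_{N→∞} m(N)/T(N) = 0. In particular, for any constant κ > 0, the original OFDM-IM mapper with T(N) = κ·N² satisfies lim_{N→∞} m(N)/(κ·N²) = 0. -/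
open Filter

private lemma m_bounds (m : ℕ → ℝ)
    (hm : ∀ N : ℕ, m N = (N : ℝ) / 2 + Real.logb 2 (N.choose (N / 2))) :
    ∀ N : ℕ, 0 ≤ m N ∧ m N ≤ (3 / 2) * N := by
  intro N
  have hc1 : (1 : ℝ) ≤ (N.choose (N / 2) : ℝ) := by
    exact_mod_cast Nat.choose_pos (Nat.div_le_self N 2)
  have hlog0 : 0 ≤ Real.logb 2 (N.choose (N / 2)) :=
    Real.logb_nonneg one_lt_two hc1
  have hcle : (N.choose (N / 2) : ℝ) ≤ (2 : ℝ) ^ N := by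
    have : N.choose (N / 2) ≤ 2 ^ N := by
      calc N.choose (N / 2) ≤ ∑ i ∈ Finset.range (N + 1), N.choose i :=
            Finset.single_le_sum (fun i _ => Nat.zero_le _)
              (Finset.mem_range.mpr (Nat.lt_succ_of_le (Nat.div_le_self N 2)))
        _ = 2 ^ N := Nat.sum_range_choose N
    exact_mod_cast this
  have hlogle : Real.logb 2 (N.choose (N / 2)) ≤ (N : ℝ) := by
    have := Real.logb_le_logb_of_le (b := 2) one_lt_two (by linarith) hcle
    simpa [Real.logb_pow, Real.logb_self_eq_one] using this
  constructor
  · rw [hm]; positivity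
  · rw [hm]; linarith

private lemma throughput_zero (m : ℕ → ℝ)
    (hm : ∀ N : ℕ, m N = (N : ℝ) / 2 + Real.logb 2 (N.choose (N / 2)))
    (T : ℕ → ℝ) (hTpos : ∀ N : ℕ, 0 < T N)
    (hsup : Tendsto (fun N : ℕ => (N : ℝ) / T N) atTop (nhds 0)) :
    Tendsto (fun N : ℕ => m N / T N) atTop (nhds 0) := by
  have h32 : Tendsto (fun N : ℕ => (3 / 2 : ℝ) * ((N : ℝ) / T N)) atTop (nhds 0) := by
    simpa using hsup.const_mul (3 / 2 : ℝ)
  refine squeeze_zero (fun N => ?_) (fun N => ?_) h32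
  · exact div_nonneg (m_bounds m hm N).1 (hTpos N).le
  · rw [mul_div_assoc']
    exact div_le_div_of_nonneg_right (m_bounds m hm N).2 (hTpos N).le

/-- With `m(N) = N/2 + log₂ C(N, ⌊N/2⌋)` bits per symbol of the optimal OFDM-IM
configuration, if the mapper cost `T` grows super-linearly (`lim N/T(N) = 0`) then the
spectro-computational throughput nullifies: `lim m(N)/T(N) = 0`. In particular, for any
`κ > 0`, the original OFDM-IM mapper with `T(N) = κ·N²` has vanishing throughput. -/
theorem ofdm_im_superlinear_mapper_throughput_nullifies
    (m : ℕ → ℝ) (hm : ∀ N : ℕ, m N = (N : ℝ) / 2 + Real.logb 2 (N.choose (N / 2)))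
    (T : ℕ → ℝ) (hTpos : ∀ N : ℕ, 0 < T N)
    (hsup : Tendsto (fun N : ℕ => (N : ℝ) / T N) atTop (nhds 0)) :
    Tendsto (fun N : ℕ => m N / T N) atTop (nhds 0) ∧
    ∀ κ : ℝ, 0 < κ →
      Tendsto (fun N : ℕ => m N / (κ * (N : ℝ) ^ 2)) atTop (nhds 0) := by
  constructor
  · exact throughput_zero m hm T hTpos hsup
  · intro κ hκ
    have hb := m_bounds m hm
    refine squeeze_zero' (Eventually.of_forall fun N => ?_) ?_
      (tendsto_const_div_atTop_nhds_zero_nat (3 / (2 * κ)))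
    · have : (0:ℝ) ≤ κ * (N : ℝ) ^ 2 := by positivity
      exact div_nonneg (hb N).1 this
    · filter_upwards [eventually_ge_atTop 1] with N hN
      have hN' : (1:ℝ) ≤ (N:ℝ) := by exact_mod_cast hN
      have hNpos : (0:ℝ) < (N:ℝ) := by linarith
      rw [div_le_div_iff₀ (by positivity) hNpos]
      have h1 : m N * (N : ℝ) ≤ (3 / 2) * (N : ℝ) * (N : ℝ) :=
        mul_le_mul_of_nonneg_right (hb N).2 hNpos.le
      have h2 : (3 / 2) * (N : ℝ) * (N : ℝ) = 3 / (2 * κ) * (κ * (N : ℝ) ^ 2) := by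
        field_simp
      linarith
end

section
/- Let m(N) = N/2 + log₂ C(N, ⌊N/2⌋) be the number of bits per symbol of the optimal OFDM-IM configuration, and let T : ℕ → ℝ be a function with T(N) ≥ m(N) − 1 for all N (any implementation must read its input) and liminf_{N→∞} m(N)/T(N) > 0 (the spectro-computational throughput does not vanish). Then T(N) = Θ(N): there exist constants c₁, c₂ > 0 and an index N₀ such that c₁·N ≤ T(N) ≤ c₂·N for all N ≥ N₀. -/
open Filter

lemma choose_le_two_pow'_s7 (n k : ℕ) : n.choose k ≤ 2 ^ n := by
  rcases le_or_gt k n with hk | hk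
  · calc n.choose k ≤ ∑ m ∈ Finset.range (n + 1), n.choose m :=
        Finset.single_le_sum (fun i _ => Nat.zero_le _) (Finset.mem_range.2 (Nat.lt_succ_of_le hk))
      _ = 2 ^ n := Nat.sum_range_choose n
  · simp [Nat.choose_eq_zero_of_lt hk]

/-- Required OFDM-IM mapping complexity: with `m(N) = N/2 + log₂ C(N, ⌊N/2⌋)`, if the
mapper cost satisfies `T(N) ≥ m(N) − 1` (it must read its input) and its
spectro-computational throughput does not vanish (`liminf m(N)/T(N) > 0`), then
`T(N) = Θ(N)`. -/
theorem ofdm_im_mapper_theta_N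
    (m : ℕ → ℝ) (hm : ∀ N : ℕ, m N = (N : ℝ) / 2 + Real.logb 2 (N.choose (N / 2)))
    (T : ℕ → ℝ) (hT : ∀ N : ℕ, T N ≥ m N - 1)
    (h : 0 < Filter.liminf (fun N : ℕ => m N / T N) atTop) :
    ∃ c₁ : ℝ, 0 < c₁ ∧ ∃ c₂ : ℝ, 0 < c₂ ∧ ∃ N₀ : ℕ, ∀ N : ℕ, N₀ ≤ N →
      c₁ * N ≤ T N ∧ T N ≤ c₂ * N := by
  -- basic bounds on m
  have hchoose_pos : ∀ N : ℕ, 0 < N.choose (N / 2) := fun N =>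
    Nat.choose_pos (Nat.div_le_self N 2)
  have hm_lb : ∀ N : ℕ, (N : ℝ) / 2 ≤ m N := by
    intro N
    rw [hm N]
    have : (0 : ℝ) ≤ Real.logb 2 (N.choose (N / 2)) := by
      apply Real.logb_nonneg one_lt_two
      exact_mod_cast hchoose_pos N
    linarith
  have hm_ub : ∀ N : ℕ, m N ≤ 3 / 2 * N := by
    intro N
    rw [hm N]
    have h1 : Real.logb 2 (N.choose (N / 2)) ≤ Real.logb 2 ((2 : ℝ) ^ N) := by
      apply Real.logb_le_logb_of_le one_lt_two (by exact_mod_cast hchoose_pos N)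
      exact_mod_cast choose_le_two_pow'_s7 N (N / 2)
    have h2 : Real.logb 2 ((2 : ℝ) ^ N) = N := by
      rw [Real.logb_pow, Real.logb_self_eq_one] <;> norm_num
    rw [h2] at h1
    linarith
  have hT_lb : ∀ N : ℕ, 4 ≤ N → (N : ℝ) / 4 ≤ T N := by
    intro N hN
    have h4 : (4 : ℝ) ≤ N := by exact_mod_cast hN
    have := hT N
    have := hm_lb N
    nlinarith
  -- positive liminf gives eventual bound
  set L := Filter.liminf (fun N : ℕ => m N / T N) atTop with hL
  have hbdd : Filter.IsBoundedUnder (· ≥ ·) atTop (fun N : ℕ => m N / T N) := by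
    refine ⟨0, ?_⟩
    rw [eventually_map]
    filter_upwards [eventually_ge_atTop 4] with N hN
    have hTpos : 0 < T N := lt_of_lt_of_le (by positivity) (hT_lb N hN)
    have hmpos : 0 ≤ m N := le_trans (by positivity) (hm_lb N)
    positivity
  have hev : ∀ᶠ N in atTop, L / 2 < m N / T N :=
    Filter.eventually_lt_of_lt_liminf (by linarith) hbdd
  obtain ⟨N₁, hN₁⟩ := eventually_atTop.mp hev
  refine ⟨1 / 4, by norm_num, 3 / L, by positivity, max 4 N₁, fun N hN => ?_⟩
  have h4 : 4 ≤ N := le_trans (le_max_left _ _) hN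
  have hN1 : N₁ ≤ N := le_trans (le_max_right _ _) hN
  have hTpos : 0 < T N := lt_of_lt_of_le (by
    have : (4:ℝ) ≤ N := by exact_mod_cast h4
    positivity) (hT_lb N h4)
  constructor
  · have := hT_lb N h4; linarith
  · have hlt := hN₁ N hN1
    have h1 : L / 2 * T N < m N := (lt_div_iff₀ hTpos).mp hlt
    have h2 := hm_ub N
    rw [div_mul_eq_mul_div, le_div_iff₀ h]
    nlinarith
end

section
/- (Greedy step of Combinadic unranking.) Let k ≥ 1 and let X be a natural number. Let c be the greatest natural number satisfying C(c, k) ≤ X (such a maximum exists whenever X < C(n, k) for some n, since c ↦ C(c,k) is unbounded and C(k−1,k) = 0 ≤ X). Then the remainder satisfies X − C(c, k) < C(c, k−1). Consequently, the next greedily chosen coefficient c' (the greatest natural with C(c', k−1) ≤ X − C(c,k)) satisfies c' < c, so the Combinadic unranking algorithm outputs strictly decreasing coefficients. -/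
/-- Greedy step of Combinadic unranking: if `c` is the greatest natural number with
`C(c,k) ≤ X` (expressed as `C(c,k) ≤ X < C(c+1,k)`), then the remainder satisfies
`X − C(c,k) < C(c,k−1)`; consequently the next greedily chosen coefficient `c'`
(the greatest natural with `C(c',k−1) ≤ X − C(c,k)`) satisfies `c' < c`. -/
theorem combinadic_greedy_step
    (k X c : ℕ) (hk : 1 ≤ k) (hc₁ : c.choose k ≤ X) (hc₂ : X < (c + 1).choose k) :
    X - c.choose k < c.choose (k - 1) ∧
    ∀ c' : ℕ, c'.choose (k - 1) ≤ X - c.choose k →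
      X - c.choose k < (c' + 1).choose (k - 1) → c' < c := by
  obtain ⟨m, rfl⟩ : ∃ m, k = m + 1 := ⟨k - 1, (Nat.succ_pred_eq_of_pos hk).symm⟩
  have pascal : (c + 1).choose (m + 1) = c.choose m + c.choose (m + 1) :=
    Nat.choose_succ_succ c m
  simp only [Nat.add_sub_cancel]
  have h1 : X - c.choose (m + 1) < c.choose m := by omega
  refine ⟨h1, fun c' hle hlt => ?_⟩
  by_contra h
  push_neg at h
  have : c.choose m ≤ c'.choose m := Nat.choose_mono m h
  omega
end
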